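/- Let x_1,...,x_n be elements of a field F and let d ≥ n. Define R(X) = ∑_{m=0}^{n-1} (∑_{k=n-m}^{n} (-1)^{k-1} e_k h_{d-m-k}) X^m, where e_k and h_j are the elementary and complete homogeneous symmetric polynomials in x_1,...,x_n (h_j = 0 for j < 0). Then X^d - R(X) is divisible by ∏_{i=1}^n (X - x_i) in F[X]; equivalently, R(X) is the remainder of X^d upon division by ∏_{i=1}^n (X - x_i). -/

import Mathlib

open Finset

/-- Complete homogeneous symmetric polynomial of degree `k` (an integer, with
`hpoly n k x = 0` for `k < 0`) evaluated at `x : Fin n → F`. -/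
def hpoly {F : Type*} [CommRing F] (n : ℕ) (k : ℤ) (x : Fin n → F) : F :=
  if 0 ≤ k then ∑ lam ∈ Finset.Nat.antidiagonalTuple n k.toNat, ∏ i, x i ^ lam i else 0

/-- Elementary symmetric polynomial of degree `k` evaluated at `x : Fin n → F`. -/
def epoly {F : Type*} [CommRing F] (n k : ℕ) (x : Fin n → F) : F :=
  ∑ s ∈ (Finset.univ : Finset (Fin n)).powersetCard k, ∏ i ∈ s, x i

/-- The weighted power sum `S_d(x_1,…,x_n)`. -/
def Sfun {F : Type*} [Field F] {n : ℕ} (x : Fin n → F) (d : ℕ) : F :=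
  ∑ i, x i ^ d / ∏ j ∈ Finset.univ.erase i, (x i - x j)

section AuxRemainder
variable {F : Type*} [CommRing F]

lemma hpoly_neg {n : ℕ} {k : ℤ} (hk : k < 0) (x : Fin n → F) : hpoly n k x = 0 := by
  rw [hpoly, if_neg (not_le.2 hk)]

lemma hpoly_zero {n : ℕ} (x : Fin n → F) : hpoly n 0 x = 1 := by
  simp [hpoly, Finset.Nat.antidiagonalTuple_zero_right]

lemma epoly_zero {n : ℕ} (x : Fin n → F) : epoly n 0 x = 1 := by
  simp [epoly]

lemma epoly_overflow {n k : ℕ} (h : n < k) (x : Fin n → F) : epoly n k x = 0 := by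
  rw [epoly, Finset.powersetCard_eq_empty.2 (by simpa using h), Finset.sum_empty]

lemma hpoly_zero_vars (t : ℤ) (x : Fin 0 → F) : hpoly 0 t x = if t = 0 then 1 else 0 := by
  rcases lt_or_ge t 0 with h | h
  · rw [hpoly_neg h, if_neg (by omega)]
  · rw [hpoly, if_pos h]
    rcases eq_or_lt_of_le h with h0 | h0
    · simp [← h0, Finset.Nat.antidiagonalTuple_zero_zero]
    · rw [if_neg (by omega)]
      obtain ⟨m, hm⟩ : ∃ m : ℕ, t.toNat = m + 1 := ⟨t.toNat - 1, by omega⟩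
      rw [hm, Finset.Nat.antidiagonalTuple_zero_succ, Finset.sum_empty]

lemma hpoly_cons {n : ℕ} (y : F) (x : Fin n → F) (j : ℕ) :
    hpoly (n+1) j (Fin.cons y x) = ∑ p ∈ Finset.HasAntidiagonal.antidiagonal j, y ^ p.1 * hpoly n p.2 x := by
  have hnn : ∀ p : ℕ × ℕ, (0:ℤ) ≤ (p.2 : ℤ) := fun p => by positivity
  rw [hpoly, if_pos (by positivity)]
  rw [show (∑ p ∈ Finset.HasAntidiagonal.antidiagonal j, y ^ p.1 * hpoly n p.2 x)
      = ∑ p ∈ Finset.HasAntidiagonal.antidiagonal j, ∑ mu ∈ Finset.Nat.antidiagonalTuple n p.2,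
        y ^ p.1 * ∏ i, x i ^ mu i from Finset.sum_congr rfl fun p _ => by
          rw [hpoly, if_pos (hnn p), Finset.mul_sum, Int.toNat_natCast]]
  rw [Finset.sum_sigma']
  refine Finset.sum_nbij' (fun lam => ⟨(lam 0, ∑ i : Fin n, lam (i.succ)), Fin.tail lam⟩)
    (fun q => Fin.cons q.1.1 q.2) ?_ ?_ ?_ ?_ ?_
  · intro lam hlam
    simp only [Finset.mem_sigma, Finset.HasAntidiagonal.mem_antidiagonal, Finset.Nat.mem_antidiagonalTuple,
      Int.toNat_natCast] at hlam ⊢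
    rw [Fin.sum_univ_succ] at hlam
    refine ⟨by omega, rfl⟩
  · rintro ⟨⟨a,b⟩, mu⟩ hq
    simp only [Finset.mem_sigma, Finset.HasAntidiagonal.mem_antidiagonal, Finset.Nat.mem_antidiagonalTuple,
      Int.toNat_natCast] at hq ⊢
    rw [Fin.sum_cons]
    omega
  · intro lam hlam
    exact Fin.cons_self_tail lam
  · rintro ⟨⟨a,b⟩, mu⟩ hq
    simp only [Finset.mem_sigma, Finset.HasAntidiagonal.mem_antidiagonal, Finset.Nat.mem_antidiagonalTuple] at hq
    simp only [Fin.cons_zero, Fin.cons_succ, Fin.tail_cons, hq.2]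
  · intro lam hlam
    rw [Fin.prod_univ_succ]
    simp only [Fin.cons_zero, Fin.cons_succ, Fin.tail]

lemma hpoly_rec {n : ℕ} (y : F) (x : Fin n → F) (j : ℤ) :
    hpoly (n+1) j (Fin.cons y x) = hpoly n j x + y * hpoly (n+1) (j-1) (Fin.cons y x) := by
  rcases lt_or_ge j 0 with h | h
  · rw [hpoly_neg h, hpoly_neg h, hpoly_neg (by omega), mul_zero, add_zero]
  rcases eq_or_lt_of_le h with h0 | h0
  · rw [← h0, hpoly_zero, hpoly_zero, hpoly_neg (by omega), mul_zero, add_zero]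
  obtain ⟨m, rfl⟩ : ∃ m : ℕ, j = (m : ℤ) + 1 := ⟨(j-1).toNat, by omega⟩
  have e1 : ((m : ℤ) + 1) = ((m + 1 : ℕ) : ℤ) := by push_cast; ring
  have e2 : ((m : ℤ) + 1 - 1) = ((m : ℕ) : ℤ) := by push_cast; ring
  rw [e1, show ((m+1:ℕ):ℤ) - 1 = ((m:ℕ):ℤ) by push_cast [Nat.cast_add]; ring, hpoly_cons, hpoly_cons, Finset.Nat.antidiagonal_succ, Finset.sum_cons,
    Finset.sum_map, pow_zero, one_mul, Finset.mul_sum]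
  congr 1
  refine Finset.sum_congr rfl fun p _ => ?_
  simp only [Function.Embedding.coe_prodMap, Function.Embedding.coeFn_mk, Prod.map_fst,
    Prod.map_snd, Function.Embedding.refl_apply]
  rw [pow_succ]
  ring

lemma epoly_eq {n : ℕ} (k : ℕ) (x : Fin n → F) :
    epoly n k x = (Multiset.map x Finset.univ.val).esymm k :=
  (Finset.esymm_map_val x Finset.univ k).symm

lemma Multiset.esymm_cons' (y : F) (s : Multiset F) (k : ℕ) :
    (y ::ₘ s).esymm (k+1) = s.esymm (k+1) + y * s.esymm k := by
  rw [Multiset.esymm, Multiset.powersetCard_cons, Multiset.map_add, Multiset.sum_add,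
    Multiset.map_map, Multiset.esymm, Multiset.esymm]
  congr 1
  rw [← Multiset.sum_map_mul_left]
  exact congrArg _ (Multiset.map_congr rfl fun t _ => by simp [Multiset.prod_cons])

lemma univ_val_cons {n : ℕ} (y : F) (x : Fin n → F) :
    Multiset.map (Fin.cons y x : Fin (n+1) → F) Finset.univ.val
      = y ::ₘ Multiset.map x Finset.univ.val := by
  rw [Fin.univ_succ, Finset.cons_val, Multiset.map_cons, Fin.cons_zero, Finset.map_val,
    Multiset.map_map]
  congr 1

lemma epoly_cons {n : ℕ} (y : F) (x : Fin n → F) (k : ℕ) :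
    epoly (n+1) (k+1) (Fin.cons y x) = epoly n (k+1) x + y * epoly n k x := by
  rw [epoly_eq, epoly_eq, epoly_eq, univ_val_cons, Multiset.esymm_cons']

lemma eh_identity : ∀ (n : ℕ) (x : Fin n → F) (t : ℤ),
    ∑ k ∈ Finset.range (n+1), (-1:F)^k * epoly n k x * hpoly n (t - (k:ℕ)) x
      = if t = 0 then 1 else 0 := by
  intro n
  induction n with
  | zero =>
    intro x t
    simp [epoly_zero, hpoly_zero_vars]
  | succ n ih =>
    intro x t
    rw [← Fin.cons_self_tail x]
    set y := x 0 with hy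
    set x' := Fin.tail x with hx'
    -- the mixed sum
    set T : ℤ → F := fun u => ∑ k ∈ Finset.range (n+1),
      (-1:F)^k * epoly n k x' * hpoly (n+1) (u - (k:ℕ)) (Fin.cons y x') with hT
    have key : ∀ u : ℤ, T u - y * T (u-1) = if u = 0 then 1 else 0 := by
      intro u
      rw [← ih x' u, hT]
      simp only
      rw [Finset.mul_sum, ← Finset.sum_sub_distrib]
      refine Finset.sum_congr rfl fun k _ => ?_
      have hr := hpoly_rec y x' (u - (k:ℕ))
      have harg : u - 1 - (k:ℕ) = u - (k:ℕ) - 1 := by ring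
      rw [harg]
      rw [hr]
      ring
    have main : ∑ k ∈ Finset.range (n+1+1), (-1:F)^k * epoly (n+1) k (Fin.cons y x')
          * hpoly (n+1) (t - (k:ℕ)) (Fin.cons y x') = T t - y * T (t-1) := by
      rw [Finset.sum_range_succ']
      simp only [Nat.cast_zero, pow_zero, one_mul, Nat.cast_add, Nat.cast_one]
      have step : ∀ k ∈ Finset.range (n+1), (-1:F)^(k+1) * epoly (n+1) (k+1) (Fin.cons y x')
            * hpoly (n+1) (t - ((k:ℤ)+1)) (Fin.cons y x')
          = (-1:F)^(k+1) * epoly n (k+1) x' * hpoly (n+1) (t - ((k:ℤ)+1)) (Fin.cons y x')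
            + (-1:F)^(k+1) * (y * epoly n k x') * hpoly (n+1) ((t-1) - (k:ℤ)) (Fin.cons y x') := by
        intro k _
        rw [epoly_cons, show t - ((k:ℤ)+1) = (t-1) - (k:ℤ) by ring]
        ring
      rw [Finset.sum_congr rfl step, Finset.sum_add_distrib]
      rw [hT]
      simp only
      rw [Finset.mul_sum]
      -- now rearrange
      rw [Finset.sum_range_succ' (fun k => (-1:F)^k * epoly n k x' * hpoly (n+1) (t - (k:ℕ)) (Fin.cons y x')) n]
      rw [Finset.sum_range_succ (fun k => (-1:F)^(k+1) * epoly n (k+1) x' * hpoly (n+1) (t - ((k:ℤ)+1)) (Fin.cons y x')) n]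
      rw [epoly_overflow (Nat.lt_succ_self n), mul_zero, zero_mul, add_zero]
      simp only [Nat.cast_zero, pow_zero, one_mul, Nat.cast_add, Nat.cast_one]
      have : ∀ k ∈ Finset.range (n+1), y * ((-1:F)^k * epoly n k x' * hpoly (n+1) (t - 1 - (k:ℕ)) (Fin.cons y x'))
          = -((-1:F)^(k+1) * (y * epoly n k x') * hpoly (n+1) (t - 1 - (k:ℕ)) (Fin.cons y x')) := by
        intro k _
        rw [pow_succ]
        ring
      rw [Finset.sum_congr rfl this, Finset.sum_neg_distrib]
      rw [epoly_zero, epoly_zero]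
      ring
    rw [main, key]

lemma hpoly_eq_sum {n : ℕ} (x : Fin n → F) {t : ℤ} (ht : 1 ≤ t) :
    hpoly n t x = ∑ k ∈ Finset.Icc 1 n, (-1:F)^(k-1) * epoly n k x * hpoly n (t - (k:ℕ)) x := by
  have h0 := eh_identity n x t
  rw [if_neg (by omega), Finset.sum_range_succ'] at h0
  simp only [Nat.cast_zero, pow_zero, one_mul, sub_zero, epoly_zero] at h0
  rw [show Finset.Icc 1 n = Finset.Ico 1 (n+1) from by rw [Finset.Ico_add_one_right_eq_Icc],
    Finset.sum_Ico_eq_sum_range]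
  simp only [Nat.add_sub_cancel]
  have : ∀ k ∈ Finset.range n, (-1:F)^(1+k-1) * epoly n (1+k) x * hpoly n (t - ((1+k : ℕ):ℤ)) x
      = -((-1:F)^(k+1) * epoly n (k+1) x * hpoly n (t - (((k+1) : ℕ):ℤ)) x) := by
    intro k _
    rw [show 1 + k - 1 = k from by omega, show 1 + k = k + 1 from by omega, pow_succ]
    ring
  rw [Finset.sum_congr rfl this, Finset.sum_neg_distrib]
  linear_combination h0

open Polynomial in
lemma prod_eq {n : ℕ} (x : Fin n → F) :
    ∏ i, (X - C (x i))
      = ∑ m ∈ Finset.range (n+1), C ((-1:F)^(n-m) * epoly n (n-m) x) * X^m := by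
  have hs := Multiset.prod_X_sub_X_eq_sum_esymm (Multiset.map x Finset.univ.val)
  rw [Multiset.map_map] at hs
  have hcard : Multiset.card (Multiset.map x Finset.univ.val) = n := by simp
  rw [hcard] at hs
  have hl : ∏ i, (X - C (x i)) = (Multiset.map ((fun t => X - C t) ∘ x) Finset.univ.val).prod := by
    rw [Finset.prod_eq_multiset_prod]
    rfl
  rw [hl, hs, ← Finset.sum_range_reflect]
  refine Finset.sum_congr rfl fun m hm => ?_
  rw [Finset.mem_range] at hm
  rw [show n + 1 - 1 - m = n - m from by omega, show n - (n - m) = m from by omega,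
    ← epoly_eq]
  rw [map_mul, map_pow, map_neg, map_one]
  ring

open Polynomial

/-- coefficient of the remainder -/
def cc {F : Type*} [CommRing F] (n : ℕ) (x : Fin n → F) (d m : ℕ) : F :=
  ∑ k ∈ Finset.Icc (n - m) n, (-1 : F) ^ (k - 1) * epoly n k x * hpoly n ((d : ℤ) - m - k) x

/-- the remainder polynomial -/
noncomputable def Rrem {F : Type*} [CommRing F] (n d : ℕ) (x : Fin n → F) : Polynomial F :=
  ∑ m ∈ Finset.range n, Polynomial.C (cc n x d m) * Polynomial.X ^ m

lemma neg_one_pow_sub {j : ℕ} (h : 1 ≤ j) : (-1:F)^j = -(-1:F)^(j-1) := by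
  obtain ⟨i, rfl⟩ : ∃ i, j = i+1 := ⟨j-1, by omega⟩
  rw [pow_succ, Nat.add_sub_cancel]
  ring

lemma cc_top {n d : ℕ} (hn : 0 < n) (hd : n ≤ d) (x : Fin n → F) :
    cc n x d (n-1) = hpoly n ((d:ℤ)+1-n) x := by
  rw [cc, hpoly_eq_sum x (t := (d:ℤ)+1-n) (by omega), show n - (n-1) = 1 from by omega]
  refine Finset.sum_congr rfl fun k hk => ?_
  rw [show (d:ℤ) - ((n-1:ℕ):ℤ) - (k:ℕ) = (d:ℤ)+1-(n:ℕ) - (k:ℕ) from by omega]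

lemma cc_base {n : ℕ} (x : Fin n → F) {m : ℕ} (hm : m < n) :
    cc n x n m = (-1:F)^(n-m-1) * epoly n (n-m) x := by
  rw [cc, Finset.sum_eq_single_of_mem (n-m) (by simp only [Finset.mem_Icc]; omega)]
  · rw [show (n:ℤ) - (m:ℕ) - ((n-m:ℕ):ℤ) = 0 from by omega, hpoly_zero, mul_one]
  · intro k hk hne
    simp only [Finset.mem_Icc] at hk
    rw [hpoly_neg (by omega), mul_zero]

lemma base_eq {n : ℕ} (hn : 0 < n) (x : Fin n → F) :
    X^n - Rrem n n x = ∏ i, (X - C (x i)) := by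
  rw [prod_eq, Finset.sum_range_succ, Nat.sub_self, epoly_zero, pow_zero, one_mul, map_one,
    one_mul, Rrem]
  have : ∀ m ∈ Finset.range n, C (cc n x n m) * X^m
      = -(C ((-1:F)^(n-m) * epoly n (n-m) x) * X^m) := by
    intro m hm
    have hmlt := Finset.mem_range.mp hm
    rw [cc_base x hmlt]
    conv_rhs => rw [neg_one_pow_sub (show 1 ≤ n - m from by omega)]
    rw [neg_mul, map_neg, neg_mul, neg_neg]
  rw [Finset.sum_congr rfl this, Finset.sum_neg_distrib]
  ring

lemma step_eq {n d : ℕ} (hn : 0 < n) (hd : n ≤ d) (x : Fin n → F) :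
    X * Rrem n d x - Rrem n (d+1) x = C (cc n x d (n-1)) * ∏ i, (X - C (x i)) := by
  have A1 : X * Rrem n d x
      = ∑ m ∈ Finset.range (n+1), C (if m = 0 then 0 else cc n x d (m-1)) * X^m := by
    rw [Finset.sum_range_succ' (fun m => C (if m = 0 then 0 else cc n x d (m-1)) * X^m) n]
    rw [if_pos rfl, map_zero, zero_mul, add_zero, Rrem, Finset.mul_sum]
    refine Finset.sum_congr rfl fun m hm => ?_
    rw [if_neg m.succ_ne_zero, Nat.add_sub_cancel]
    ring
  have A2 : Rrem n (d+1) x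
      = ∑ m ∈ Finset.range (n+1), C (if m = n then 0 else cc n x (d+1) m) * X^m := by
    rw [Finset.sum_range_succ, if_pos rfl, map_zero, zero_mul, add_zero, Rrem]
    exact Finset.sum_congr rfl fun m hm => by rw [if_neg (Finset.mem_range.mp hm).ne]
  have A3 : C (cc n x d (n-1)) * ∏ i, (X - C (x i))
      = ∑ m ∈ Finset.range (n+1), C (cc n x d (n-1) * ((-1:F)^(n-m) * epoly n (n-m) x)) * X^m := by
    rw [prod_eq, Finset.mul_sum]
    exact Finset.sum_congr rfl fun m hm => by rw [← mul_assoc, ← map_mul]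
  rw [A1, A2, A3, ← Finset.sum_sub_distrib]
  refine Finset.sum_congr rfl fun m hm => ?_
  rw [← sub_mul, ← map_sub]
  rw [Finset.mem_range] at hm
  congr 2
  rcases eq_or_ne m 0 with rfl | hm0
  · rw [if_pos rfl, if_neg hn.ne, zero_sub, cc_top hn hd, cc, Nat.sub_zero, Finset.Icc_self,
      Finset.sum_singleton,
      show ((d+1:ℕ):ℤ) - ((0:ℕ):ℤ) - (n:ℕ) = (d:ℤ)+1-(n:ℕ) from by omega]
    conv_rhs => rw [neg_one_pow_sub hn]
    ring
  rcases eq_or_ne m n with rfl | hmn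
  · rw [if_neg hm0, if_pos rfl, sub_zero, Nat.sub_self, pow_zero, epoly_zero, mul_one, mul_one]
  · rw [if_neg hm0, if_neg hmn]
    have hmlt : m < n := by omega
    have hsplit : Finset.Icc (n-m) n = insert (n-m) (Finset.Icc (n-(m-1)) n) := by
      ext k; simp only [Finset.mem_Icc, Finset.mem_insert]; omega
    have hnot : n-m ∉ Finset.Icc (n-(m-1)) n := by simp only [Finset.mem_Icc]; omega
    rw [cc, cc, hsplit, Finset.sum_insert hnot]
    have hsum : ∑ k ∈ Finset.Icc (n-(m-1)) n,
          (-1:F)^(k-1) * epoly n k x * hpoly n (((d+1:ℕ):ℤ) - (m:ℕ) - (k:ℕ)) x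
        = ∑ k ∈ Finset.Icc (n-(m-1)) n,
          (-1:F)^(k-1) * epoly n k x * hpoly n ((d:ℤ) - ((m-1:ℕ):ℤ) - (k:ℕ)) x :=
      Finset.sum_congr rfl fun k _ => by
        rw [show ((d+1:ℕ):ℤ) - (m:ℕ) - (k:ℕ) = (d:ℤ) - ((m-1:ℕ):ℤ) - (k:ℕ) from by omega]
    rw [hsum, cc_top hn hd,
      show ((d+1:ℕ):ℤ) - (m:ℕ) - ((n-m:ℕ):ℤ) = (d:ℤ)+1-(n:ℕ) from by omega]
    conv_rhs => rw [neg_one_pow_sub (show 1 ≤ n - m from by omega)]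
    ring

end AuxRemainder

open Polynomial

/-- The explicit remainder of `X^d` upon division by `∏ (X - x_i)`. -/
theorem remainder_formula {F : Type*} [Field F] (n d : ℕ) (hd : n ≤ d)
    (x : Fin n → F) :
    (∏ i, (Polynomial.X - Polynomial.C (x i))) ∣
      (Polynomial.X ^ d -
        ∑ m ∈ Finset.range n,
          Polynomial.C (∑ k ∈ Finset.Icc (n - m) n,
              (-1 : F) ^ (k - 1) * epoly n k x * hpoly n ((d : ℤ) - m - k) x)
            * Polynomial.X ^ m) := by
  have main : ∀ e : ℕ, n ≤ e → (∏ i, (X - C (x i))) ∣ (X ^ e - Rrem n e x) := by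
    rcases Nat.eq_zero_or_pos n with hn0 | hn
    · subst hn0
      intro e _
      simp only [Finset.univ_eq_empty, Finset.prod_empty]
      exact one_dvd _
    intro e he
    induction e, he using Nat.le_induction with
    | base =>
      rw [← base_eq hn x]
    | succ e he ih =>
      have heq : X^(e+1) - Rrem n (e+1) x
          = X * (X^e - Rrem n e x) + C (cc n x e (n-1)) * ∏ i, (X - C (x i)) := by
        rw [← step_eq hn he x]
        ring
      rw [heq]
      exact dvd_add (Dvd.dvd.mul_left ih X) (Dvd.dvd.mul_left dvd_rfl _)
  have h := main d hd
  simpa only [Rrem, cc] using h
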